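/- If f : Σⁿ → P(B) is a (1,2)-sensitive bucketing function, then |B| ≥ n·|Σ|^{n-1}. -/

import Mathlib

namespace Levenshtein

structure Cost (α β δ : Type*) where
  delete : α → δ
  insert : β → δ
  substitute : α → β → δ

def defaultCost {α : Type*} [DecidableEq α] : Cost α α ℕ where
  delete _ := 1
  insert _ := 1
  substitute a b := if a = b then 0 else 1

def impl {α β δ : Type*} [AddZeroClass δ] [Min δ]
    (C : Cost α β δ)
    (xs : List α) (y : β) (d : {r : List δ // 0 < r.length}) : {r : List δ // 0 < r.length} :=
  let ⟨ds, w⟩ := d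
  xs.zip (ds.zip ds.tail) |>.foldr
    (init := ⟨[C.insert y + ds.getLast (List.length_pos_iff.mp w)], by simp⟩)
    (fun ⟨x, d₀, d₁⟩ ⟨r, w⟩ =>
      ⟨min (C.delete x + r[0]) (min (C.insert y + d₀) (C.substitute x y + d₁)) :: r, by simp⟩)

end Levenshtein

def suffixLevenshtein {α β δ : Type*} [AddZeroClass δ] [Min δ] (C : Levenshtein.Cost α β δ)
    (xs : List α) (ys : List β) : {r : List δ // 0 < r.length} :=
  ys.foldr
    (Levenshtein.impl C xs)
    (xs.foldr (init := ⟨[0], by simp⟩) (fun a ⟨r, w⟩ => ⟨(C.delete a + r[0]) :: r, by simp⟩))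

def levenshtein {α β δ : Type*} [AddZeroClass δ] [Min δ] (C : Levenshtein.Cost α β δ)
    (xs : List α) (ys : List β) : δ :=
  let ⟨r, w⟩ := suffixLevenshtein C xs ys
  r[0]

/-- Edit (Levenshtein) distance between two length-`n` sequences over `α`. -/
def editDist {α : Type*} [DecidableEq α] {n : ℕ} (s t : Fin n → α) : ℕ :=
  levenshtein Levenshtein.defaultCost (List.ofFn s) (List.ofFn t)

/-- `f` is a `(d₁, d₂)`-sensitive bucketing function. -/
def IsSensitive {α B : Type*} [DecidableEq α] {n : ℕ} (d₁ d₂ : ℕ)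
    (f : (Fin n → α) → Set B) : Prop :=
  (∀ s t : Fin n → α, editDist s t ≤ d₁ → (f s ∩ f t).Nonempty) ∧
  (∀ s t : Fin n → α, d₂ ≤ editDist s t → f s ∩ f t = ∅)


section LevLemmas
namespace Levenshtein
variable {α β δ : Type*} [AddZeroClass δ] [Min δ] (C : Cost α β δ)

theorem impl_cons {xs : List α} {y : β} {x : α} {d : δ} {ds : List δ} {w} (w' : 0 < List.length ds) :
    impl C (x :: xs) y ⟨d :: ds, w⟩ =
      let ⟨r, w⟩ := impl C xs y ⟨ds, w'⟩
      ⟨min (C.delete x + r[0]) (min (C.insert y + d) (C.substitute x y + ds[0])) :: r, by simp⟩ :=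
  match ds, w' with | _ :: _, _ => rfl

theorem impl_cons_fst_zero {xs : List α} {y : β} {x : α} {d : δ} {ds : List δ} {w} (h)
    (w' : 0 < List.length ds) :
    (impl C (x :: xs) y ⟨d :: ds, w⟩).1[0]'h =
      let ⟨r, w⟩ := impl C xs y ⟨ds, w'⟩
      min (C.delete x + r[0]) (min (C.insert y + d) (C.substitute x y + ds[0])) :=
  match ds, w' with | _ :: _, _ => rfl

theorem impl_length {xs : List α} {y : β} (d : {r : List δ // 0 < r.length})
    (w : d.1.length = xs.length + 1) :
    (impl C xs y d).1.length = xs.length + 1 := by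
  induction xs generalizing d with
  | nil => rfl
  | cons x xs ih =>
    dsimp [impl]
    match d, w with
    | ⟨d₁ :: d₂ :: ds, _⟩, w =>
      dsimp
      congr 1
      exact ih ⟨d₂ :: ds, (by simp)⟩ (by simpa using w)

end Levenshtein

open Levenshtein

variable {α β δ : Type*} [AddZeroClass δ] [Min δ] (C : Levenshtein.Cost α β δ)

theorem suffixLevenshtein_length (xs : List α) (ys : List β) :
    (suffixLevenshtein C xs ys).1.length = xs.length + 1 := by
  induction ys with
  | nil =>
    dsimp [suffixLevenshtein]
    induction xs with
    | nil => rfl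
    | cons _ xs ih =>
      simp_all
  | cons y ys ih =>
    dsimp [suffixLevenshtein]
    rw [impl_length]
    exact ih

theorem suffixLevenshtein_cons₂ (xs : List α) (y ys) :
    suffixLevenshtein C xs (y :: ys) = impl C xs y (suffixLevenshtein C xs ys) :=
  rfl

@[simp] theorem levenshtein_nil_nil : levenshtein C [] [] = 0 := by
  simp [levenshtein, suffixLevenshtein]

theorem levenshtein_nil_cons (y) (ys) :
    levenshtein C [] (y :: ys) = C.insert y + levenshtein C [] ys := by
  have key : ∀ s : {r : List δ // 0 < r.length}, s.1.length = 1 →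
      (impl C [] y s).1[0]'(by simp [impl]) = C.insert y + s.1[0]'s.2 := by
    rintro ⟨_ | ⟨a, _ | ⟨b, l⟩⟩, w⟩ h <;> simp_all [impl]
  exact key _ (suffixLevenshtein_length C [] ys)

theorem levenshtein_cons_nil (x : α) (xs : List α) :
    levenshtein C (x :: xs) [] = C.delete x + levenshtein C xs [] :=
  rfl

theorem suffixLevenshtein_cons₁_aux {α} {x y : { l : List α // 0 < l.length }}
    (w₀ : x.1[0]'x.2 = y.1[0]'y.2) (w : x.1.tail = y.1.tail) : x = y := by
  match x, y with
  | ⟨hx :: tx, _⟩, ⟨hy :: ty, _⟩ => simp_all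

theorem suffixLevenshtein_cons₁ (x : α) (xs ys) :
    suffixLevenshtein C (x :: xs) ys =
      ⟨levenshtein C (x :: xs) ys ::
        (suffixLevenshtein C xs ys).1, by simp⟩ := by
  induction ys with
  | nil => rfl
  | cons y ys ih =>
    apply suffixLevenshtein_cons₁_aux
    · rfl
    · rw [suffixLevenshtein_cons₂ (xs := x :: xs), ih, impl_cons]
      · rfl
      · simp [suffixLevenshtein_length]

theorem suffixLevenshtein_cons_cons_fst_get_zero (x : α) (xs y ys) (w) :
    (suffixLevenshtein C (x :: xs) (y :: ys)).1[0]'w =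
      let ⟨dx, _⟩ := suffixLevenshtein C xs (y :: ys)
      let ⟨dy, _⟩ := suffixLevenshtein C (x :: xs) ys
      let ⟨dxy, _⟩ := suffixLevenshtein C xs ys
      min (C.delete x + dx[0]) (min (C.insert y + dy[0]) (C.substitute x y + dxy[0])) := by
  conv =>
    lhs
    dsimp only [suffixLevenshtein_cons₂]
  simp only [suffixLevenshtein_cons₁]
  rw [impl_cons_fst_zero]
  rfl

theorem levenshtein_cons_cons (x : α) (xs : List α) (y : β) (ys : List β) :
    levenshtein C (x :: xs) (y :: ys) =
      min (C.delete x + levenshtein C xs (y :: ys))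
        (min (C.insert y + levenshtein C (x :: xs) ys)
          (C.substitute x y + levenshtein C xs ys)) :=
  suffixLevenshtein_cons_cons_fst_get_zero ..

end LevLemmas

section Lev
variable {α : Type*} [DecidableEq α]

lemma dc_delete (a : α) : (Levenshtein.defaultCost (α := α)).delete a = 1 := rfl
lemma dc_insert (a : α) : (Levenshtein.defaultCost (α := α)).insert a = 1 := rfl
lemma dc_subst (a b : α) :
    (Levenshtein.defaultCost (α := α)).substitute a b = if a = b then 0 else 1 := rfl

lemma lev_self (l : List α) : levenshtein Levenshtein.defaultCost l l = 0 := by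
  induction l with
  | nil => simp
  | cons a l ih =>
    have h : levenshtein Levenshtein.defaultCost (a :: l) (a :: l) ≤ 0 := by
      rw [levenshtein_cons_cons]
      refine le_trans (min_le_right _ _) (le_trans (min_le_right _ _) ?_)
      rw [dc_subst, ih, if_pos rfl]
    omega

lemma len_le : ∀ (x y : List α), x.length ≤ y.length + levenshtein Levenshtein.defaultCost x y := by
  intro x
  induction x with
  | nil => intro y; simp
  | cons a xs ih =>
    intro y
    induction y with
    | nil =>
      have := ih []
      rw [levenshtein_cons_nil, dc_delete]
      simp only [List.length_cons, List.length_nil] at *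
      omega
    | cons b ys ihy =>
      rw [levenshtein_cons_cons, dc_delete, dc_insert, dc_subst]
      have h1 := ih (b :: ys)
      have h2 := ihy
      have h3 := ih ys
      simp only [List.length_cons] at *
      split <;> omega

lemma len_le' : ∀ (x y : List α), y.length ≤ x.length + levenshtein Levenshtein.defaultCost x y := by
  intro x
  induction x with
  | nil =>
    intro y
    induction y with
    | nil => simp
    | cons b ys ihy =>
      rw [levenshtein_nil_cons, dc_insert]
      simp only [List.length_cons, List.length_nil] at *
      omega
  | cons a xs ih =>
    intro y
    induction y with
    | nil => simp
    | cons b ys ihy =>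
      rw [levenshtein_cons_cons, dc_delete, dc_insert, dc_subst]
      have h1 := ih (b :: ys)
      have h2 := ihy
      have h3 := ih ys
      simp only [List.length_cons] at *
      split <;> omega

lemma lev_eq_zero : ∀ (x y : List α), levenshtein Levenshtein.defaultCost x y = 0 → x = y := by
  intro x
  induction x with
  | nil =>
    intro y h
    cases y with
    | nil => rfl
    | cons b ys =>
      rw [levenshtein_nil_cons, dc_insert] at h
      omega
  | cons a xs ih =>
    intro y h
    cases y with
    | nil =>
      rw [levenshtein_cons_nil, dc_delete] at h
      omega
    | cons b ys =>
      rw [levenshtein_cons_cons, dc_delete, dc_insert, dc_subst] at h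
      by_cases hab : a = b
      · rw [if_pos hab] at h
        have h0 : levenshtein Levenshtein.defaultCost xs ys = 0 := by omega
        rw [hab, ih ys h0]
      · rw [if_neg hab] at h
        omega

lemma lev_le_one_agree : ∀ (x y : List α), x.length = y.length →
    levenshtein Levenshtein.defaultCost x y ≤ 1 →
    ∃ p : ℕ, ∀ i (h1 : i < x.length) (h2 : i < y.length), i ≠ p →
      x.get ⟨i, h1⟩ = y.get ⟨i, h2⟩ := by
  intro x
  induction x with
  | nil => intro y _ _; exact ⟨0, fun i h1 => by simp at h1⟩
  | cons a xs ih =>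
    intro y hlen h
    cases y with
    | nil => simp at hlen
    | cons b ys =>
      simp only [List.length_cons, Nat.succ_inj] at hlen
      rw [levenshtein_cons_cons, dc_delete, dc_insert, dc_subst] at h
      rcases le_or_gt (1 + levenshtein Levenshtein.defaultCost xs (b :: ys)) 1 with hd | hd
      · exfalso
        have h0 : levenshtein Levenshtein.defaultCost xs (b :: ys) = 0 := by omega
        have := len_le' xs (b :: ys)
        rw [h0] at this
        simp only [List.length_cons] at this
        omega
      rcases le_or_gt (1 + levenshtein Levenshtein.defaultCost (a :: xs) ys) 1 with hi | hi
      · exfalso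
        have h0 : levenshtein Levenshtein.defaultCost (a :: xs) ys = 0 := by omega
        have := len_le (a :: xs) ys
        rw [h0] at this
        simp only [List.length_cons] at this
        omega
      by_cases hab : a = b
      · rw [if_pos hab] at h
        have hs : levenshtein Levenshtein.defaultCost xs ys ≤ 1 := by omega
        obtain ⟨p, hp⟩ := ih ys hlen hs
        refine ⟨p + 1, fun i h1 h2 hip => ?_⟩
        match i with
        | 0 => simpa using hab
        | k + 1 =>
          simp only [List.get_cons_succ]
          exact hp k (by simpa using h1) (by simpa using h2) (by omega)
      · rw [if_neg hab] at h
        have hs : levenshtein Levenshtein.defaultCost xs ys = 0 := by omega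
        have := lev_eq_zero xs ys hs
        subst this
        refine ⟨0, fun i h1 h2 hip => ?_⟩
        match i with
        | 0 => omega
        | k + 1 => simp

lemma lev_le_one_of_agree : ∀ (x y : List α) (p : ℕ), x.length = y.length →
    (∀ i (h1 : i < x.length) (h2 : i < y.length), i ≠ p → x.get ⟨i, h1⟩ = y.get ⟨i, h2⟩) →
    levenshtein Levenshtein.defaultCost x y ≤ 1 := by
  intro x
  induction x with
  | nil => intro y p hlen _; cases y with
    | nil => simp
    | cons b ys => simp at hlen
  | cons a xs ih =>
    intro y p hlen hag
    cases y with
    | nil => simp at hlen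
    | cons b ys =>
      simp only [List.length_cons, Nat.succ_inj] at hlen
      rw [levenshtein_cons_cons]
      refine le_trans (min_le_right _ _) (le_trans (min_le_right _ _) ?_)
      rw [dc_subst]
      cases p with
      | zero =>
        have hxy : xs = ys := by
          apply List.ext_get hlen
          intro k hk1 hk2
          have := hag (k + 1) (by simpa using hk1) (by simpa using hk2) (by omega)
          simpa using this
        subst hxy
        rw [lev_self]
        split <;> omega
      | succ q =>
        have hab : a = b := by
          have := hag 0 (by simp) (by simp) (by omega)
          simpa using this
        have hle : levenshtein Levenshtein.defaultCost xs ys ≤ 1 := by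
          apply ih ys q hlen
          intro k hk1 hk2 hkq
          have := hag (k + 1) (by simpa using hk1) (by simpa using hk2) (by omega)
          simpa using this
        rw [if_pos hab]
        omega

end Lev

section FinLev
variable {α : Type*} [DecidableEq α] {n : ℕ}

lemma editDist_agree {s t : Fin n → α} (h : editDist s t ≤ 1) :
    ∃ p : ℕ, ∀ i : Fin n, (i : ℕ) ≠ p → s i = t i := by
  obtain ⟨p, hp⟩ := lev_le_one_agree (List.ofFn s) (List.ofFn t) (by simp) h
  refine ⟨p, fun i hip => ?_⟩
  have := hp i (by simpa using i.isLt) (by simpa using i.isLt) hip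
  simpa [List.get_ofFn] using this

lemma editDist_le_one {s t : Fin n → α} (p : ℕ)
    (h : ∀ i : Fin n, (i : ℕ) ≠ p → s i = t i) : editDist s t ≤ 1 := by
  apply lev_le_one_of_agree (List.ofFn s) (List.ofFn t) p (by simp)
  intro i h1 h2 hip
  simp only [List.get_ofFn]
  exact h _ (by simpa using hip)

end FinLev

theorem stmt4 {α B : Type*} [Fintype α] [DecidableEq α] [Fintype B]
    (hα : 1 < Fintype.card α) {n : ℕ}
    (f : (Fin n → α) → Set B) (hf : IsSensitive 1 2 f)
    (hused : ∀ b : B, ∃ s : Fin n → α, b ∈ f s) :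
    n * Fintype.card α ^ (n - 1) ≤ Fintype.card B := by
  obtain ⟨a, b, hab⟩ := Fintype.exists_pair_of_one_lt_card hα
  cases n with
  | zero => simp
  | succ m =>
    -- the two strings on the line (i, g)
    set S : Fin (m+1) → (Fin m → α) → (Fin (m+1) → α) := fun i g => i.insertNth a g with hS
    set T : Fin (m+1) → (Fin m → α) → (Fin (m+1) → α) := fun i g => i.insertNth b g with hT
    have hdist : ∀ i g, editDist (S i g) (T i g) ≤ 1 := by
      intro i g
      apply editDist_le_one (i : ℕ)
      intro j hj
      have hji : j ≠ i := fun h => hj (by rw [h])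
      obtain ⟨k, hk⟩ := Fin.exists_succAbove_eq hji
      rw [← hk]
      simp [hS, hT]
    have hnon : ∀ i g, (f (S i g) ∩ f (T i g)).Nonempty := fun i g => hf.1 _ _ (hdist i g)
    choose F hF1 hF2 using fun i g => hnon i g
    -- the key: a bucket shared by u and v means they agree off one position
    have hshared : ∀ (u v : Fin (m+1) → α) (c : B), c ∈ f u → c ∈ f v →
        ∃ p : ℕ, ∀ j : Fin (m+1), (j : ℕ) ≠ p → u j = v j := by
      intro u v c hu hv
      apply editDist_agree
      by_contra h
      push_neg at h
      have := hf.2 u v (by omega)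
      rw [Set.eq_empty_iff_forall_notMem] at this
      exact this c ⟨hu, hv⟩
    -- F is injective as a map on pairs
    have hinj : Function.Injective (fun ig : Fin (m+1) × (Fin m → α) => F ig.1 ig.2) := by
      rintro ⟨i, g⟩ ⟨i', g'⟩ heq
      simp only at heq
      -- the four strings s=S i g, t=T i g, s'=S i' g', t'=T i' g' pairwise share bucket F i g
      have hb1 := hF1 i g
      have hb2 := hF2 i g
      have hb3 : F i g ∈ f (S i' g') := heq ▸ hF1 i' g'
      have hb4 : F i g ∈ f (T i' g') := heq ▸ hF2 i' g'
      -- claim: S i' g' agrees with S i g off i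
      have key : ∀ (u : Fin (m+1) → α), F i g ∈ f u →
          ∀ j : Fin (m+1), j ≠ i → u j = S i g j := by
        intro u hu j hji
        by_contra hne
        obtain ⟨p, hp⟩ := hshared u (S i g) (F i g) hu hb1
        have hpj : (j : ℕ) = p := by
          by_contra hpj
          exact hne (hp j hpj)
        obtain ⟨q, hq⟩ := hshared u (T i g) (F i g) hu hb2
        have hui : u i = S i g i := hp i (by omega)
        have hSi : S i g i = a := by simp [hS]
        have hTi : T i g i = b := by simp [hT]
        have hqi : (i : ℕ) = q := by
          by_contra hqi
          have := hq i hqi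
          rw [hui, hSi] at this
          rw [hTi] at this
          exact hab this
        have huj : u j = T i g j := hq j (by omega)
        have hST : S i g j = T i g j := by
          obtain ⟨k, hk⟩ := Fin.exists_succAbove_eq hji
          rw [← hk]; simp [hS, hT]
        exact hne (by rw [huj, hST])
      have hs' := key (S i' g') hb3
      have ht' := key (T i' g') hb4
      -- S i' g' and T i' g' differ at i', so i' = i
      have hii : i' = i := by
        by_contra hne
        have h1 := hs' i' hne
        have h2 := ht' i' hne
        have : S i' g' i' = T i' g' i' := by rw [h1, h2]
        simp [hS, hT] at this
        exact hab this
      subst hii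
      -- and g' = g
      have hg : g' = g := by
        funext k
        have hji : i'.succAbove k ≠ i' := Fin.succAbove_ne i' k
        have := hs' (i'.succAbove k) hji
        simpa [hS] using this
      rw [hg]
    have := Fintype.card_le_of_injective _ hinj
    simpa [Fintype.card_prod, Fintype.card_fun, mul_comm] using this
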